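/- Let n ≥ 2 and let f be an admissible functional on triples of permutations of {1,…,n}. Let π be a permutation of {1,…,n}, let π̄ = w₀∘π be its complement, and suppose 1 ≤ j < k ≤ n are positions with π̄(j) > π̄(k); let σ be π̄ with the entries in positions j and k swapped, and suppose ℓ(σ) = ℓ(π̄) − 1. If i is an index with j ≤ i < k (the swapped positions straddle the gap between i and i+1), then f(π, s_i, σ) = 1. -/

import Mathlib

/- Background definitions: descent-cycling for Schubert problems on S_n,
   with permutations modeled as `Equiv.Perm (Fin n)` (0-indexed positions:
   position i here corresponds to position i+1 in 1-indexed notation). -/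

namespace DC

/-- A triple of permutations of {1,…,n}. -/
abbrev Triple (n : ℕ) := Equiv.Perm (Fin n) × Equiv.Perm (Fin n) × Equiv.Perm (Fin n)

/-- The length ℓ(π) = number of inversions of π. -/
def len {n : ℕ} (π : Equiv.Perm (Fin n)) : ℕ :=
  (Finset.univ.filter (fun p : Fin n × Fin n => p.1 < p.2 ∧ π p.2 < π p.1)).card

/-- π has a descent at (0-indexed) position i, i.e. π(i) > π(i+1). -/
def Descent {n : ℕ} (π : Equiv.Perm (Fin n)) (i : ℕ) : Prop :=
  ∃ h : i + 1 < n, π ⟨i + 1, h⟩ < π ⟨i, Nat.lt_of_succ_lt h⟩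

/-- π has an ascent at (0-indexed) position i, i.e. π(i) < π(i+1). -/
def Ascent {n : ℕ} (π : Equiv.Perm (Fin n)) (i : ℕ) : Prop :=
  ∃ h : i + 1 < n, π ⟨i, Nat.lt_of_succ_lt h⟩ < π ⟨i + 1, h⟩

/-- The adjacent transposition s_i swapping (0-indexed) i and i+1. -/
def s (n i : ℕ) : Equiv.Perm (Fin n) :=
  if h : i + 1 < n then Equiv.swap ⟨i, Nat.lt_of_succ_lt h⟩ ⟨i + 1, h⟩ else 1

/-- The longest permutation w₀ : m ↦ n+1−m (0-indexed: m ↦ n−1−m). -/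
def w0 (n : ℕ) : Equiv.Perm (Fin n) := Fin.revPerm

/-- The complement π̄ = w₀ ∘ π of a permutation. -/
def compl {n : ℕ} (π : Equiv.Perm (Fin n)) : Equiv.Perm (Fin n) := w0 n * π

/-- A Schubert problem: a triple of permutations whose lengths sum to n(n−1)/2. -/
def IsSchubert {n : ℕ} (P : Triple n) : Prop :=
  len P.1 + len P.2.1 + len P.2.2 = n.choose 2

/-- A Schubert problem is dc-trivial if at some position all three permutations ascend. -/
def DCTrivial {n : ℕ} (P : Triple n) : Prop :=
  IsSchubert P ∧ ∃ i : ℕ, Ascent P.1 i ∧ Ascent P.2.1 i ∧ Ascent P.2.2 i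

/-- The three Schubert problems obtainable from (u,v,w) by adding a descent at i. -/
def MoveSet {n : ℕ} (u v w : Equiv.Perm (Fin n)) (i : ℕ) : Set (Triple n) :=
  {(u * s n i, v, w), (u, v * s n i, w), (u, v, w * s n i)}

/-- P and P′ are joined by a single descent-cycling move. -/
def DCMove {n : ℕ} (P P' : Triple n) : Prop :=
  ∃ (u v w : Equiv.Perm (Fin n)) (i : ℕ),
    len u + len v + len w + 1 = n.choose 2 ∧
    Ascent u i ∧ Ascent v i ∧ Ascent w i ∧
    P ∈ MoveSet u v w i ∧ P' ∈ MoveSet u v w i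

/-- dc-equivalence: the reflexive–transitive closure of descent-cycling moves. -/
def DCEquiv {n : ℕ} : Triple n → Triple n → Prop := Relation.ReflTransGen DCMove

/-- An admissible functional on triples of permutations: constant on dc-equivalence
classes of Schubert problems, zero on dc-trivial Schubert problems, one on (id,id,w₀). -/
def Admissible {n : ℕ} (f : Triple n → ℤ) : Prop :=
  (∀ P P' : Triple n, IsSchubert P → IsSchubert P' → DCEquiv P P' → f P = f P') ∧
  (∀ P : Triple n, DCTrivial P → f P = 0) ∧
  f (1, 1, w0 n) = 1

end DC

namespace DCAux
open DC Equiv Finset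

variable {n : ℕ}

lemma s_eq_swap {i : ℕ} (h : i + 1 < n) :
    s n i = Equiv.swap ⟨i, Nat.lt_of_succ_lt h⟩ ⟨i + 1, h⟩ := by
  simp [s, h]

lemma s_mul_self (i : ℕ) : s n i * s n i = 1 := by
  by_cases h : i + 1 < n
  · simp [s_eq_swap h, Equiv.swap_mul_self]
  · simp [s, h]

lemma mul_s_apply {i : ℕ} (π : Equiv.Perm (Fin n)) (x : Fin n) :
    (π * s n i) x = π (s n i x) := rfl

lemma ascent_iff_not_descent {π : Equiv.Perm (Fin n)} {i : ℕ} (h : i + 1 < n) :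
    Ascent π i ↔ ¬ Descent π i := by
  constructor
  · rintro ⟨h1, ha⟩ ⟨h2, hd⟩
    exact absurd (ha.trans hd) (lt_irrefl _)
  · intro hd
    refine ⟨h, ?_⟩
    rcases lt_trichotomy (π ⟨i, Nat.lt_of_succ_lt h⟩) (π ⟨i + 1, h⟩) with h1 | h1 | h1
    · exact h1
    · exact absurd (π.injective h1) (by simp [Fin.ext_iff])
    · exact absurd ⟨h, h1⟩ hd

lemma descent_iff_not_ascent {π : Equiv.Perm (Fin n)} {i : ℕ} (h : i + 1 < n) :
    Descent π i ↔ ¬ Ascent π i := by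
  rw [ascent_iff_not_descent h, not_not]

lemma ascent_one {i : ℕ} (h : i + 1 < n) : Ascent (1 : Equiv.Perm (Fin n)) i :=
  ⟨h, by simp [Fin.lt_def]⟩

lemma descent_s {i : ℕ} (h : i + 1 < n) : Descent (s n i) i := by
  refine ⟨h, ?_⟩
  rw [s_eq_swap h]
  simp [Fin.lt_def]

lemma ascent_s {i m : ℕ} (h : m + 1 < n) (hi : i + 1 < n) (hmi : m ≠ i) :
    Ascent (s n m) i := by
  · refine ⟨hi, ?_⟩
    rw [s_eq_swap h]
    rcases eq_or_ne i (m+1) with rfl | h2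
    · have e1 : (⟨m+1, Nat.lt_of_succ_lt hi⟩ : Fin n) = ⟨m + 1, h⟩ := rfl
      rw [e1, Equiv.swap_apply_right,
        Equiv.swap_apply_of_ne_of_ne (by simp only [ne_eq, Fin.mk.injEq]; omega) (by simp only [ne_eq, Fin.mk.injEq]; omega)]
      simp only [Fin.lt_def]; omega
    · rcases eq_or_ne (i+1) m with h3 | h3
      · rw [Equiv.swap_apply_of_ne_of_ne (by simp only [ne_eq, Fin.mk.injEq]; omega) (by simp only [ne_eq, Fin.mk.injEq]; omega)]
        have : (⟨i+1, hi⟩ : Fin n) = ⟨m, Nat.lt_of_succ_lt h⟩ := by simp only [ne_eq, Fin.mk.injEq]; omega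
        rw [this, Equiv.swap_apply_left]
        simp [Fin.lt_def]; omega
      · rw [Equiv.swap_apply_of_ne_of_ne (by simp only [ne_eq, Fin.mk.injEq]; omega) (by simp only [ne_eq, Fin.mk.injEq]; omega),
          Equiv.swap_apply_of_ne_of_ne (by simp only [ne_eq, Fin.mk.injEq]; omega) (by simp only [ne_eq, Fin.mk.injEq]; omega)]
        simp [Fin.lt_def]

end DCAux
namespace DCAux
open DC Equiv Finset

variable {n : ℕ}

lemma adj_swap_lt {i : ℕ} (hn1 : i + 1 < n) {x y : Fin n} (hxy : x < y)
    (hne : ¬(x = (⟨i, Nat.lt_of_succ_lt hn1⟩ : Fin n) ∧ y = (⟨i+1, hn1⟩ : Fin n))) :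
    Equiv.swap (⟨i, Nat.lt_of_succ_lt hn1⟩ : Fin n) ⟨i+1, hn1⟩ x
      < Equiv.swap (⟨i, Nat.lt_of_succ_lt hn1⟩ : Fin n) ⟨i+1, hn1⟩ y := by
  simp only [Equiv.swap_apply_def] at *
  split_ifs with h1 h2 h3 h4 h5 h6 h7 h8 <;>
    simp only [Fin.lt_def, Fin.ext_iff, not_and] at * <;> omega

lemma len_mul_s_of_ascent {π : Equiv.Perm (Fin n)} {i : ℕ} (h : Ascent π i) :
    len (π * s n i) = len π + 1 := by
  obtain ⟨hn1, hv⟩ := h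
  set a : Fin n := ⟨i, Nat.lt_of_succ_lt hn1⟩ with ha
  set b : Fin n := ⟨i+1, hn1⟩ with hb
  have hab : a < b := by simp [ha, hb, Fin.lt_def]
  set sw := Equiv.swap a b with hsw
  have hs : s n i = sw := s_eq_swap hn1
  have happ : ∀ x, (π * s n i) x = π (sw x) := fun x => by rw [mul_s_apply, hs]
  set g : Fin n × Fin n → Fin n × Fin n := fun p => (sw p.1, sw p.2) with hg
  have hginj : Function.Injective g := fun p q hpq => by
    have h1 := congrArg Prod.fst hpq
    have h2 := congrArg Prod.snd hpq
    simp only [hg] at h1 h2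
    exact Prod.ext (sw.injective h1) (sw.injective h2)
  have hB : (Finset.univ.filter
        (fun p : Fin n × Fin n => p.1 < p.2 ∧ (π * s n i) p.2 < (π * s n i) p.1))
      = insert (a, b) ((Finset.univ.filter
        (fun p : Fin n × Fin n => p.1 < p.2 ∧ π p.2 < π p.1)).image g) := by
    ext p
    simp only [Finset.mem_filter, Finset.mem_univ, true_and, Finset.mem_insert,
      Finset.mem_image, happ]
    constructor
    · rintro ⟨hlt, hval⟩
      by_cases hpab : p = (a, b)
      · exact Or.inl hpab
      · refine Or.inr ⟨(sw p.1, sw p.2), ⟨?_, ?_⟩, ?_⟩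
        · refine adj_swap_lt hn1 hlt ?_
          intro ⟨h1, h2⟩
          exact hpab (Prod.ext h1 h2)
        · simpa [hsw] using hval
        · simp [hg, hsw]
    · rintro (rfl | ⟨q, ⟨hqlt, hqval⟩, rfl⟩)
      · refine ⟨hab, ?_⟩
        rw [hsw]
        rw [Equiv.swap_apply_left, Equiv.swap_apply_right]
        exact hv
      · have hqab : ¬(q.1 = a ∧ q.2 = b) := by
          rintro ⟨h1, h2⟩
          rw [h1, h2] at hqval
          exact absurd (hqval.trans hv) (lt_irrefl _)
        refine ⟨adj_swap_lt hn1 hqlt hqab, ?_⟩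
        simp only [hg]
        rw [hsw]
        simpa [Equiv.swap_apply_self] using hqval
  have hnotmem : (a, b) ∉ ((Finset.univ.filter
      (fun p : Fin n × Fin n => p.1 < p.2 ∧ π p.2 < π p.1)).image g) := by
    simp only [Finset.mem_image, not_exists]
    rintro q ⟨hq, hgq⟩
    simp only [Finset.mem_filter] at hq
    have h1 : sw q.1 = a := congrArg Prod.fst hgq
    have h2 : sw q.2 = b := congrArg Prod.snd hgq
    have e1 : q.1 = b := by
      have := congrArg sw h1; rwa [hsw, Equiv.swap_apply_self, Equiv.swap_apply_left] at this
    have e2 : q.2 = a := by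
      have := congrArg sw h2; rwa [hsw, Equiv.swap_apply_self, Equiv.swap_apply_right] at this
    have := hq.2.1
    rw [e1, e2] at this
    exact absurd (this.trans hab) (lt_irrefl _)
  rw [len, hB, Finset.card_insert_of_notMem hnotmem,
    Finset.card_image_of_injective _ hginj, len, add_comm]

lemma len_mul_s_of_descent {π : Equiv.Perm (Fin n)} {i : ℕ} (h : Descent π i) :
    len (π * s n i) + 1 = len π := by
  obtain ⟨hn1, hv⟩ := h
  have ha : Ascent (π * s n i) i := by
    refine ⟨hn1, ?_⟩
    rw [mul_s_apply, mul_s_apply, s_eq_swap hn1, Equiv.swap_apply_left, Equiv.swap_apply_right]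
    exact hv
  have := len_mul_s_of_ascent ha
  rw [mul_assoc, s_mul_self, mul_one] at this
  omega

lemma len_one : len (1 : Equiv.Perm (Fin n)) = 0 := by
  rw [len, Finset.card_eq_zero, Finset.filter_eq_empty_iff]
  rintro p -
  rintro ⟨h1, h2⟩
  simp only [Equiv.Perm.one_apply] at h2
  exact absurd (h1.trans h2) (lt_irrefl _)

lemma len_s {i : ℕ} (h : i + 1 < n) : len (s n i) = 1 := by
  have := len_mul_s_of_ascent (ascent_one h (n := n))
  rwa [one_mul, len_one] at this

end DCAux
namespace DCAux
open DC Equiv Finset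

variable {n : ℕ}

lemma compl_apply (π : Equiv.Perm (Fin n)) (x : Fin n) : compl π x = (π x).rev := by
  simp [DC.compl, DC.w0, Equiv.Perm.mul_apply]

lemma descent_compl_iff {π : Equiv.Perm (Fin n)} {i : ℕ} :
    Descent (compl π) i ↔ Ascent π i := by
  unfold Descent Ascent
  refine exists_congr fun h => ?_
  rw [compl_apply, compl_apply, Fin.rev_lt_rev]

lemma ascent_compl_iff {π : Equiv.Perm (Fin n)} {i : ℕ} :
    Ascent (compl π) i ↔ Descent π i := by
  unfold Descent Ascent
  refine exists_congr fun h => ?_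
  rw [compl_apply, compl_apply, Fin.rev_lt_rev]

lemma card_lt_pairs : (Finset.univ.filter fun p : Fin n × Fin n => p.1 < p.2).card
    = n.choose 2 := by
  rw [Finset.card_filter, ← Finset.univ_product_univ, Finset.sum_product, Finset.sum_comm]
  have h1 : ∀ y : Fin n, (∑ x : Fin n, if (x, y).1 < (x, y).2 then 1 else 0) = (y : ℕ) := by
    intro y
    rw [← Finset.card_filter]
    have : (Finset.univ.filter fun x : Fin n => (x, y).1 < (x, y).2) = Finset.Iio y := by
      ext x; simp
    rw [this, Fin.card_Iio]
  rw [Finset.sum_congr rfl fun y _ => h1 y, Fin.sum_univ_eq_sum_range (fun i => i) n,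
    Finset.sum_range_id, Nat.choose_two_right]

lemma len_add_len_compl (π : Equiv.Perm (Fin n)) : len π + len (compl π) = n.choose 2 := by
  have hA : (Finset.univ.filter fun p : Fin n × Fin n => p.1 < p.2 ∧ π p.2 < π p.1)
      = (Finset.univ.filter fun p : Fin n × Fin n => p.1 < p.2).filter
          (fun p => π p.2 < π p.1) := by
    rw [Finset.filter_filter]
  have hB : (Finset.univ.filter fun p : Fin n × Fin n => p.1 < p.2 ∧ compl π p.2 < compl π p.1)
      = (Finset.univ.filter fun p : Fin n × Fin n => p.1 < p.2).filter
          (fun p => ¬ (π p.2 < π p.1)) := by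
    rw [Finset.filter_filter]
    apply Finset.filter_congr
    rintro p -
    simp only [compl_apply, Fin.rev_lt_rev, iff_iff_implies_and_implies]
    constructor
    · rintro ⟨h1, h2⟩
      exact ⟨h1, not_lt_of_gt h2⟩
    · rintro ⟨h1, h2⟩
      refine ⟨h1, lt_of_le_of_ne (not_lt.mp h2) fun he => ?_⟩
      exact (ne_of_lt h1) (π.injective he)
  rw [len, len, hA, hB, Finset.card_filter_add_card_filter_not, card_lt_pairs]

lemma len_compl_w0 : len (w0 n) = n.choose 2 := by
  have := len_add_len_compl (1 : Equiv.Perm (Fin n))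
  rwa [len_one, DC.compl, mul_one, zero_add] at this

end DCAux
namespace DCAux
open DC Equiv Finset

variable {n : ℕ}

lemma fin_le_apply_of_strictMono {N : ℕ} (f : Fin N → Fin N) (hf : StrictMono f) (x : Fin N) :
    x ≤ f x := by
  have h2 : id ≤ f := by
    rw [Pi.le_def]
    by_contra! H
    obtain ⟨y, hy, hy'⟩ := (wellFounded_lt (α := Fin N)).has_min _ H
    exact hy' _ (hf hy) hy
  exact h2 x

lemma eq_one_of_no_descent {π : Equiv.Perm (Fin n)} (h : ∀ i, ¬ Descent π i) : π = 1 := by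
  rcases n with - | m
  · exact Subsingleton.elim _ _
  · have hmono : StrictMono ⇑π := by
      rw [Fin.strictMono_iff_lt_succ]
      intro i
      have hi : (i : ℕ) + 1 < m + 1 := by omega
      have := (ascent_iff_not_descent hi).mpr (h i)
      obtain ⟨h1, hlt⟩ := this
      have e1 : Fin.castSucc i = (⟨(i : ℕ), Nat.lt_of_succ_lt hi⟩ : Fin (m+1)) := rfl
      have e2 : Fin.succ i = (⟨(i : ℕ) + 1, hi⟩ : Fin (m+1)) := rfl
      rw [e1, e2]
      exact hlt
    have hinv : StrictMono ⇑π.symm := fun x y hxy => by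
      rw [← hmono.lt_iff_lt, Equiv.apply_symm_apply, Equiv.apply_symm_apply]; exact hxy
    refine Equiv.ext fun x => le_antisymm ?_ ?_
    · have := fin_le_apply_of_strictMono _ hinv (π x)
      rwa [Equiv.symm_apply_apply] at this
    · exact fin_le_apply_of_strictMono _ hmono x

lemma len_mul_swap_lt {π : Equiv.Perm (Fin n)} {a b : Fin n} (hab : a < b) (hv : π b < π a) :
    len (π * Equiv.swap a b) < len π := by
  set sw := Equiv.swap a b with hsw
  have happ : ∀ x, (π * sw) x = π (sw x) := fun x => rfl
  set φ : Fin n × Fin n → Fin n × Fin n :=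
    fun p => if sw p.1 < sw p.2 then (sw p.1, sw p.2) else p with hφ
  set Invπ := Finset.univ.filter (fun p : Fin n × Fin n => p.1 < p.2 ∧ π p.2 < π p.1) with hIπ
  set Invτ := Finset.univ.filter
    (fun p : Fin n × Fin n => p.1 < p.2 ∧ (π * sw) p.2 < (π * sw) p.1) with hIτ
  have hmem : (a, b) ∈ Invπ := by
    simp only [hIπ, Finset.mem_filter, Finset.mem_univ, true_and]
    exact ⟨hab, hv⟩
  have hmaps : ∀ p ∈ Invτ, φ p ∈ Invπ.erase (a, b) := by
    intro p hp
    simp only [hIτ, Finset.mem_filter, Finset.mem_univ, true_and, happ] at hp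
    obtain ⟨hlt, hval⟩ := hp
    simp only [Finset.mem_erase, hIπ, Finset.mem_filter, Finset.mem_univ, true_and, hφ]
    by_cases hbr : sw p.1 < sw p.2
    · rw [if_pos hbr]
      refine ⟨?_, hbr, hval⟩
      intro he
      have e1 : sw p.1 = a := congrArg Prod.fst he
      have e2 : sw p.2 = b := congrArg Prod.snd he
      have f1 : p.1 = b := by
        have := congrArg sw e1; rwa [hsw, Equiv.swap_apply_self, Equiv.swap_apply_left] at this
      have f2 : p.2 = a := by
        have := congrArg sw e2; rwa [hsw, Equiv.swap_apply_self, Equiv.swap_apply_right] at this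
      rw [f1, f2] at hlt
      exact absurd (hlt.trans hab) (lt_irrefl _)
    · rw [if_neg hbr]
      have hflip : sw p.2 < sw p.1 := by
        rcases lt_trichotomy (sw p.1) (sw p.2) with h | h | h
        · exact absurd h hbr
        · exact absurd (sw.injective h) (ne_of_lt hlt)
        · exact h
      have hpab : p ≠ (a, b) := by
        rintro rfl
        simp only [hsw, Equiv.swap_apply_left, Equiv.swap_apply_right] at hval
        exact absurd (hval.trans hv) (lt_irrefl _)
      refine ⟨hpab, hlt, ?_⟩
      -- case analysis on p.1, p.2 vs a, b
      by_cases h1a : p.1 = a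
      · by_cases h2b : p.2 = b
        · exact absurd (Prod.ext h1a h2b) hpab
        · -- x = a, y ∉ {a, b} : sw y = y, hval : π y < π b
          have h2a : p.2 ≠ a := fun he => (ne_of_lt hlt) (h1a.trans he.symm)
          have hswy : sw p.2 = p.2 := Equiv.swap_apply_of_ne_of_ne h2a h2b
          have hswx : sw p.1 = b := by rw [h1a, hsw, Equiv.swap_apply_left]
          rw [hswx, hswy] at hval
          rw [h1a]
          exact hval.trans hv
      · by_cases h2b : p.2 = b
        · -- y = b, x ∉ {a,b} : sw x = x, hval : π a < π x
          have h1b : p.1 ≠ b := fun he => (ne_of_lt hlt) (he.trans h2b.symm)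
          have hswx : sw p.1 = p.1 := Equiv.swap_apply_of_ne_of_ne h1a h1b
          have hswy : sw p.2 = a := by rw [h2b, hsw, Equiv.swap_apply_right]
          rw [hswx, hswy] at hval
          rw [h2b]
          exact hv.trans hval
        · -- neither end equals: flip impossible unless p.1 = b or p.2 = a
          by_cases h1b : p.1 = b
          · -- x = b: y > b, y ∉ {a,b}: sw y = y; flip : y < a : contradiction
            have h2a : p.2 ≠ a := by
              intro he
              rw [h1b, he] at hlt
              exact absurd (hab.trans hlt) (lt_irrefl _)
            have hswy : sw p.2 = p.2 := Equiv.swap_apply_of_ne_of_ne h2a h2b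
            have hswx : sw p.1 = a := by rw [h1b, hsw, Equiv.swap_apply_right]
            rw [hswx, hswy] at hflip
            rw [h1b] at hlt
            exact absurd ((hflip.trans hab).trans hlt) (lt_irrefl _)
          · by_cases h2a : p.2 = a
            · -- y = a, x < a: sw x = x, sw y = b: flip: b < x < a < b
              have hswx : sw p.1 = p.1 := Equiv.swap_apply_of_ne_of_ne h1a h1b
              have hswy : sw p.2 = b := by rw [h2a, hsw, Equiv.swap_apply_left]
              rw [hswx, hswy] at hflip
              rw [h2a] at hlt
              exact absurd ((hflip.trans hlt).trans hab) (lt_irrefl _)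
            · have hswx : sw p.1 = p.1 := Equiv.swap_apply_of_ne_of_ne h1a h1b
              have hswy : sw p.2 = p.2 := Equiv.swap_apply_of_ne_of_ne h2a h2b
              rw [hswx, hswy] at hflip
              exact absurd (hflip.trans hlt) (lt_irrefl _)
  have hinj : Set.InjOn φ Invτ := by
    intro p hp q hq hpq
    simp only [hIτ, Finset.coe_filter, Set.mem_setOf_eq] at hp hq
    simp only [hφ] at hpq
    by_cases hbp : sw p.1 < sw p.2 <;> by_cases hbq : sw q.1 < sw q.2
    · rw [if_pos hbp, if_pos hbq] at hpq
      exact Prod.ext (sw.injective (congrArg Prod.fst hpq))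
        (sw.injective (congrArg Prod.snd hpq))
    · rw [if_pos hbp, if_neg hbq] at hpq
      exfalso
      rw [← hpq] at hbq
      simp only [hsw, Equiv.swap_apply_self] at hbq
      exact hbq hp.2.1
    · rw [if_neg hbp, if_pos hbq] at hpq
      exfalso
      rw [hpq] at hbp
      simp only [hsw, Equiv.swap_apply_self] at hbp
      exact hbp hq.2.1
    · rw [if_neg hbp, if_neg hbq] at hpq
      exact hpq
  have hcard := Finset.card_le_card_of_injOn φ hmaps hinj
  rw [Finset.card_erase_of_mem hmem] at hcard
  have hpos : 0 < Invπ.card := Finset.card_pos.mpr ⟨(a, b), hmem⟩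
  have : len (π * sw) = Invτ.card := rfl
  have hπ : len π = Invπ.card := rfl
  omega

lemma no_intermediate {w : Equiv.Perm (Fin n)} {a b m : Fin n} (hab : a < b)
    (hlen : len (w * Equiv.swap a b) + 1 = len w)
    (ham : a < m) (hmb : m < b) (h1 : w b < w m) (h2 : w m < w a) : False := by
  have ham' : a ≠ m := ne_of_lt ham
  have hmb' : m ≠ b := ne_of_lt hmb
  have hab' : a ≠ b := ne_of_lt hab
  have c1 : len (w * Equiv.swap a m) < len w := len_mul_swap_lt ham h2
  set u1 := w * Equiv.swap a m with hu1
  have hu1m : u1 m = w a := by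
    show w (Equiv.swap a m m) = w a; rw [Equiv.swap_apply_right]
  have hu1b : u1 b = w b := by
    show w (Equiv.swap a m b) = w b
    rw [Equiv.swap_apply_of_ne_of_ne hab'.symm hmb'.symm]
  have hu1a : u1 a = w m := by
    show w (Equiv.swap a m a) = w m; rw [Equiv.swap_apply_left]
  have c2 : len (u1 * Equiv.swap m b) < len u1 := by
    apply len_mul_swap_lt hmb
    rw [hu1m, hu1b]
    exact h1.trans h2
  set u2 := u1 * Equiv.swap m b with hu2
  have hu2a : u2 a = w m := by
    show u1 (Equiv.swap m b a) = w m
    rw [Equiv.swap_apply_of_ne_of_ne ham' hab', hu1a]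
  have hu2m : u2 m = w b := by
    show u1 (Equiv.swap m b m) = w b; rw [Equiv.swap_apply_left, hu1b]
  have c3 : len (u2 * Equiv.swap a m) < len u2 := by
    apply len_mul_swap_lt ham
    rw [hu2a, hu2m]
    exact h1
  have key : Equiv.swap a m * Equiv.swap m b * Equiv.swap a m = Equiv.swap a b := by
    have := Equiv.swap_mul_swap_mul_swap (x := b) (y := m) (z := a) hmb'.symm hab'.symm
    rw [Equiv.swap_comm m a, Equiv.swap_comm b m] at this
    exact this
  have hcomp : u2 * Equiv.swap a m = w * Equiv.swap a b := by
    rw [hu2, hu1, ← key]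
    group
  rw [hcomp] at c3
  omega

end DCAux
namespace DCAux
open DC Equiv Finset

variable {n : ℕ}

lemma compl_def (u : Equiv.Perm (Fin n)) : DC.compl u = w0 n * u := rfl

lemma ascent_mul_s_of_descent {u : Equiv.Perm (Fin n)} {m : ℕ} (h : Descent u m) :
    Ascent (u * s n m) m := by
  obtain ⟨hn1, hv⟩ := h
  refine ⟨hn1, ?_⟩
  rw [mul_s_apply, mul_s_apply, s_eq_swap hn1, Equiv.swap_apply_left, Equiv.swap_apply_right]
  exact hv

lemma descent_mul_s_of_ascent {u : Equiv.Perm (Fin n)} {m : ℕ} (h : Ascent u m) :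
    Descent (u * s n m) m := by
  obtain ⟨hn1, hv⟩ := h
  refine ⟨hn1, ?_⟩
  rw [mul_s_apply, mul_s_apply, s_eq_swap hn1, Equiv.swap_apply_left, Equiv.swap_apply_right]
  exact hv

lemma mul_s_mul_s (u : Equiv.Perm (Fin n)) (m : ℕ) : u * s n m * s n m = u := by
  rw [mul_assoc, s_mul_self, mul_one]

lemma lemmaA (f : DC.Triple n → ℤ) (hf : DC.Admissible f) (u : Equiv.Perm (Fin n)) :
    f (u, 1, w0 n * u) = 1 := by
  suffices H : ∀ N (u : Equiv.Perm (Fin n)), len u = N → f (u, 1, w0 n * u) = 1 from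
    H _ u rfl
  intro N
  induction N using Nat.strong_induction_on with
  | _ N ih =>
    intro u hu
    by_cases h1 : u = 1
    · subst h1
      rw [mul_one]
      exact hf.2.2
    · obtain ⟨m, hm⟩ : ∃ m, Descent u m := by
        by_contra hno
        push_neg at hno
        exact h1 (eq_one_of_no_descent hno)
      have hn1 : m + 1 < n := hm.1
      have hlen1 : len (u * s n m) + 1 = len u := len_mul_s_of_descent hm
      have hAsc3 : Ascent (w0 n * u) m := by
        rw [← compl_def]
        exact ascent_compl_iff.mpr hm
      have hlen3 : len (w0 n * u * s n m) = len (w0 n * u) + 1 := len_mul_s_of_ascent hAsc3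
      have hsum : len u + len (w0 n * u) = n.choose 2 := by
        rw [← compl_def]; exact len_add_len_compl u
      have hmove : DCMove (u, (1 : Equiv.Perm (Fin n)), w0 n * u)
          (u * s n m, 1, w0 n * (u * s n m)) := by
        refine ⟨u * s n m, 1, w0 n * u, m, ?_, ascent_mul_s_of_descent hm,
          ascent_one hn1, hAsc3, ?_, ?_⟩
        · rw [len_one]; omega
        · have : (u, (1 : Equiv.Perm (Fin n)), w0 n * u)
              = (u * s n m * s n m, 1, w0 n * u) := by rw [mul_s_mul_s]
          rw [this]
          exact Set.mem_insert _ _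
        · have : (u * s n m, (1 : Equiv.Perm (Fin n)), w0 n * (u * s n m))
              = (u * s n m, 1, (w0 n * u) * s n m) := by rw [mul_assoc]
          rw [this]
          exact Set.mem_insert_of_mem _ (Set.mem_insert_of_mem _ rfl)
      have hS1 : IsSchubert (u, (1 : Equiv.Perm (Fin n)), w0 n * u) := by
        show len u + len 1 + len (w0 n * u) = n.choose 2
        rw [len_one]; omega
      have hS2 : IsSchubert (u * s n m, (1 : Equiv.Perm (Fin n)), w0 n * (u * s n m)) := by
        show len (u * s n m) + len 1 + len (w0 n * (u * s n m)) = n.choose 2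
        rw [len_one, ← mul_assoc, hlen3]; omega
      rw [hf.1 _ _ hS1 hS2 (Relation.ReflTransGen.single hmove)]
      exact ih (len (u * s n m)) (by omega) (u * s n m) rfl
end DCAux
namespace DCAux
open DC Equiv Finset

variable {n : ℕ}

lemma swap_comm_left {x y z : Fin n} (hxy : x ≠ y) (hxz : x ≠ z) (hyz : y ≠ z) :
    Equiv.swap x z * Equiv.swap x y = Equiv.swap x y * Equiv.swap y z := by
  ext a
  simp only [Equiv.Perm.mul_apply, Equiv.swap_apply_def]
  split_ifs <;> simp_all

lemma swap_comm_right {x y z : Fin n} (hxy : x ≠ y) (hxz : x ≠ z) (hyz : y ≠ z) :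
    Equiv.swap x z * Equiv.swap y z = Equiv.swap y z * Equiv.swap x y := by
  ext a
  simp only [Equiv.Perm.mul_apply, Equiv.swap_apply_def]
  split_ifs <;> simp_all

end DCAux
namespace DCAux
open DC Equiv Finset

variable {n : ℕ}

lemma mainAux (f : DC.Triple n → ℤ) (hf : DC.Admissible f) :
    ∀ g : ℕ, ∀ (π : Equiv.Perm (Fin n)) (j k : Fin n) (i : ℕ),
      (k : ℕ) - (j : ℕ) = g → j < k →
      DC.compl π k < DC.compl π j →
      ∀ σ : Equiv.Perm (Fin n), σ = DC.compl π * Equiv.swap j k →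
      DC.len σ + 1 = DC.len (DC.compl π) →
      (j : ℕ) ≤ i → i < (k : ℕ) →
      f (π, DC.s n i, σ) = 1 := by
  intro g
  induction g using Nat.strong_induction_on with
  | _ g ih =>
  intro π j k i hg hjk hdesc σ hσ hlen hji hik
  have hjk' : (j : ℕ) < (k : ℕ) := hjk
  have hkn : (k : ℕ) < n := k.isLt
  have hi1 : i + 1 < n := by omega
  have hne_jk : j ≠ k := ne_of_lt hjk
  have hσj : σ j = DC.compl π k := by
    rw [hσ, Equiv.Perm.mul_apply, Equiv.swap_apply_left]
  have hσk : σ k = DC.compl π j := by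
    rw [hσ, Equiv.Perm.mul_apply, Equiv.swap_apply_right]
  have hσo : ∀ x, x ≠ j → x ≠ k → σ x = DC.compl π x := by
    intro x h1 h2; rw [hσ, Equiv.Perm.mul_apply, Equiv.swap_apply_of_ne_of_ne h1 h2]
  have hsum : DC.len π + DC.len (DC.compl π) = n.choose 2 := len_add_len_compl π
  have hS1 : IsSchubert (π, DC.s n i, σ) := by
    show DC.len π + DC.len (s n i) + DC.len σ = n.choose 2
    rw [len_s hi1]; omega
  by_cases hcase : (k : ℕ) = (j : ℕ) + 1
  · -- base case: adjacent, i = j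
    have hij : i = (j : ℕ) := by omega
    have hjfin : j = (⟨i, Nat.lt_of_succ_lt hi1⟩ : Fin n) := by
      apply Fin.ext; simp [hij]
    have hkfin : k = (⟨i + 1, hi1⟩ : Fin n) := by
      apply Fin.ext; simp [hcase, hij]
    have hσs : σ = DC.compl π * s n i := by rw [hσ, s_eq_swap hi1, hjfin, hkfin]
    have hAσ : Ascent σ i := by
      refine ⟨hi1, ?_⟩
      rw [← hjfin, ← hkfin, hσj, hσk]; exact hdesc
    have hAπ : Ascent π i := descent_compl_iff.mp ⟨hi1, by rw [← hjfin, ← hkfin]; exact hdesc⟩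
    have hlenπs : DC.len (π * s n i) = DC.len π + 1 := len_mul_s_of_ascent hAπ
    have hmove : DCMove (π, DC.s n i, σ) (π * s n i, 1, σ) := by
      refine ⟨π, 1, σ, i, ?_, hAπ, ascent_one hi1, hAσ, ?_, ?_⟩
      · rw [len_one]; omega
      · have he : (π, DC.s n i, σ) = (π, (1 : Equiv.Perm (Fin n)) * s n i, σ) := by
          rw [one_mul]
        rw [he]
        exact Set.mem_insert_of_mem _ (Set.mem_insert _ _)
      · exact Set.mem_insert _ _
    have hS2 : IsSchubert (π * s n i, (1 : Equiv.Perm (Fin n)), σ) := by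
      show DC.len (π * s n i) + DC.len 1 + DC.len σ = n.choose 2
      rw [len_one, hlenπs]; omega
    rw [hf.1 _ _ hS1 hS2 (Relation.ReflTransGen.single hmove)]
    have hfinal : σ = w0 n * (π * s n i) := by rw [hσs, compl_def, mul_assoc]
    rw [hfinal]
    exact lemmaA f hf (π * s n i)
  · -- gap at least 2
    have hnointer : ∀ x : Fin n, j < x → x < k →
        ¬(DC.compl π k < DC.compl π x ∧ DC.compl π x < DC.compl π j) := by
      intro x h1 h2 ⟨ha, hb⟩
      have hlen' : DC.len (DC.compl π * Equiv.swap j k) + 1 = DC.len (DC.compl π) := by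
        rw [← hσ]; exact hlen
      exact no_intermediate hjk hlen' h1 h2 ha hb
    by_cases hside : (j : ℕ) < i
    · -- shrink from the left: m = j
      set m : ℕ := (j : ℕ) with hmdef
      have hm1 : m + 1 < n := by omega
      set jj : Fin n := ⟨m + 1, hm1⟩ with hjj
      have hjmfin : (⟨m, Nat.lt_of_succ_lt hm1⟩ : Fin n) = j := by apply Fin.ext; simp [hmdef]
      have hjjj : jj ≠ j := by rw [hjj]; intro he; have := congrArg Fin.val he; simp at this; omega
      have hjjk : jj ≠ k := by
        rw [hjj]; intro he; have := congrArg Fin.val he; simp at this; omega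
      have hjjlt : j < jj := by
        rw [Fin.lt_def, hjj]; simp; omega
      have hjjltk : jj < k := by
        rw [Fin.lt_def, hjj]; simp; omega
      have hσjj : σ jj = DC.compl π jj := hσo jj hjjj hjjk
      have hsj : s n m j = jj := by
        rw [s_eq_swap hm1, hjmfin]
        exact Equiv.swap_apply_left _ _
      have hsjj : s n m jj = j := by
        rw [s_eq_swap hm1, hjmfin]
        exact Equiv.swap_apply_right _ _
      have hsk : s n m k = k := by
        rw [s_eq_swap hm1, hjmfin]
        exact Equiv.swap_apply_of_ne_of_ne hne_jk.symm hjjk.symm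
      have hvne : DC.compl π jj ≠ DC.compl π j := fun he => hjjj ((DC.compl π).injective he)
      -- the common step: f (π, s i, σ) = f (π * s m, s i, σ * s m), and Schubertness
      have hstep : IsSchubert (π * s n m, DC.s n i, σ * s n m) ∧
          f (π, DC.s n i, σ) = f (π * s n m, DC.s n i, σ * s n m) := by
        rcases lt_or_gt_of_ne hvne with hA | hB
        · -- compl π descends at m; σ descends at m
          have hAk : DC.compl π jj < DC.compl π k := by
            rcases lt_or_gt_of_ne (fun he => hjjk ((DC.compl π).injective he) :
              DC.compl π jj ≠ DC.compl π k) with h | h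
            · exact h
            · exact absurd ⟨h, hA⟩ (hnointer jj hjjlt hjjltk)
          have hDσ : Descent σ m := by
            refine ⟨hm1, ?_⟩
            rw [hjmfin]
            show σ jj < σ j
            rw [hσjj, hσj]; exact hAk
          have hDc : Descent (DC.compl π) m := by
            refine ⟨hm1, ?_⟩
            rw [hjmfin]
            exact hA
          have hAπ : Ascent π m := descent_compl_iff.mp hDc
          have hl1 : DC.len (π * s n m) = DC.len π + 1 := len_mul_s_of_ascent hAπ
          have hl2 : DC.len (σ * s n m) + 1 = DC.len σ := len_mul_s_of_descent hDσ
          have hS2 : IsSchubert (π * s n m, DC.s n i, σ * s n m) := by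
            show DC.len (π * s n m) + DC.len (s n i) + DC.len (σ * s n m) = n.choose 2
            rw [len_s hi1, hl1]; omega
          refine ⟨hS2, ?_⟩
          have hmove : DCMove (π, DC.s n i, σ) (π * s n m, DC.s n i, σ * s n m) := by
            refine ⟨π, s n i, σ * s n m, m, ?_, hAπ,
              ascent_s hi1 hm1 (by omega), ascent_mul_s_of_descent hDσ, ?_, ?_⟩
            · rw [len_s hi1]; omega
            · have he : (π, DC.s n i, σ) = (π, s n i, (σ * s n m) * s n m) := by
                rw [mul_s_mul_s]
              rw [he]
              exact Set.mem_insert_of_mem _ (Set.mem_insert_of_mem _ rfl)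
            · exact Set.mem_insert _ _
          exact hf.1 _ _ hS1 hS2 (Relation.ReflTransGen.single hmove)
        · -- compl π ascends at m; σ ascends at m; π descends at m
          have hDπ : Descent π m := ascent_compl_iff.mp ⟨hm1, by rw [hjmfin]; exact hB⟩
          have hAσ : Ascent σ m := by
            refine ⟨hm1, ?_⟩
            rw [hjmfin]
            show σ j < σ jj
            rw [hσjj, hσj]
            exact hdesc.trans hB
          have hl1 : DC.len (π * s n m) + 1 = DC.len π := len_mul_s_of_descent hDπ
          have hl2 : DC.len (σ * s n m) = DC.len σ + 1 := len_mul_s_of_ascent hAσ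
          have hS2 : IsSchubert (π * s n m, DC.s n i, σ * s n m) := by
            show DC.len (π * s n m) + DC.len (s n i) + DC.len (σ * s n m) = n.choose 2
            rw [len_s hi1, hl2]; omega
          refine ⟨hS2, ?_⟩
          have hmove : DCMove (π, DC.s n i, σ) (π * s n m, DC.s n i, σ * s n m) := by
            refine ⟨π * s n m, s n i, σ, m, ?_, ascent_mul_s_of_descent hDπ,
              ascent_s hi1 hm1 (by omega), hAσ, ?_, ?_⟩
            · rw [len_s hi1]; omega
            · have he : (π, DC.s n i, σ) = ((π * s n m) * s n m, s n i, σ) := by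
                rw [mul_s_mul_s]
              rw [he]
              exact Set.mem_insert _ _
            · exact Set.mem_insert_of_mem _ (Set.mem_insert_of_mem _ rfl)
          exact hf.1 _ _ hS1 hS2 (Relation.ReflTransGen.single hmove)
      obtain ⟨hS2, hEq⟩ := hstep
      have hcompl' : DC.compl (π * s n m) = DC.compl π * s n m := by
        rw [compl_def, compl_def, mul_assoc]
      have hsum' : DC.len (π * s n m) + DC.len (DC.compl (π * s n m)) = n.choose 2 :=
        len_add_len_compl _
      have hlen' : DC.len (σ * s n m) + 1 = DC.len (DC.compl (π * s n m)) := by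
        have h1 : DC.len (π * s n m) + DC.len (s n i) + DC.len (σ * s n m) = n.choose 2 := hS2
        rw [len_s hi1] at h1
        omega
      have hdesc' : DC.compl (π * s n m) k < DC.compl (π * s n m) jj := by
        rw [hcompl']
        show DC.compl π (s n m k) < DC.compl π (s n m jj)
        rw [hsk, hsjj]
        exact hdesc
      have hσ' : σ * s n m = DC.compl (π * s n m) * Equiv.swap jj k := by
        rw [hcompl', hσ, mul_assoc, mul_assoc]
        congr 1
        rw [s_eq_swap hm1, hjmfin]
        exact swap_comm_left hjjj.symm hne_jk hjjk
      rw [hEq]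
      exact ih ((k : ℕ) - (jj : ℕ)) (by rw [hjj]; simp; omega) (π * s n m) jj k i rfl
        hjjltk hdesc' (σ * s n m) hσ' hlen' (by rw [hjj]; simpa) hik
    · -- shrink from the right: m = k - 1
      have hii : (j : ℕ) = i := by omega
      set m : ℕ := (k : ℕ) - 1 with hmdef
      have hm1 : m + 1 < n := by omega
      have hmk : m + 1 = (k : ℕ) := by omega
      set kk : Fin n := ⟨m, Nat.lt_of_succ_lt hm1⟩ with hkk
      have hkfin : (⟨m + 1, hm1⟩ : Fin n) = k := by apply Fin.ext; simp [hmk]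
      have hkkj : kk ≠ j := by
        rw [hkk]; intro he; have := congrArg Fin.val he; simp at this; omega
      have hkkk : kk ≠ k := by
        rw [hkk]; intro he; have := congrArg Fin.val he; simp at this; omega
      have hjltkk : j < kk := by
        rw [Fin.lt_def, hkk]; simp; omega
      have hkklt : kk < k := by
        rw [Fin.lt_def, hkk]; simp; omega
      have hσkk : σ kk = DC.compl π kk := hσo kk hkkj hkkk
      have hskk : s n m kk = k := by
        rw [s_eq_swap hm1, hkfin]
        have : kk = (⟨m, Nat.lt_of_succ_lt hm1⟩ : Fin n) := rfl
        rw [← this]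
        exact Equiv.swap_apply_left _ _
      have hsk : s n m k = kk := by
        rw [s_eq_swap hm1, hkfin]
        exact Equiv.swap_apply_right _ _
      have hsj : s n m j = j := by
        rw [s_eq_swap hm1, hkfin]
        exact Equiv.swap_apply_of_ne_of_ne hkkj.symm hne_jk
      have hvne : DC.compl π kk ≠ DC.compl π k := fun he => hkkk ((DC.compl π).injective he)
      have hstep : IsSchubert (π * s n m, DC.s n i, σ * s n m) ∧
          f (π, DC.s n i, σ) = f (π * s n m, DC.s n i, σ * s n m) := by
        rcases lt_or_gt_of_ne hvne with hB | hA
        · -- compl π ascends at m (values kk < k); π descends at m; σ ascends at m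
          have hDπ : Descent π m := ascent_compl_iff.mp ⟨hm1, by
            rw [hkfin]
            show DC.compl π kk < DC.compl π k
            exact hB⟩
          have hAσ : Ascent σ m := by
            refine ⟨hm1, ?_⟩
            rw [hkfin]
            show σ kk < σ k
            rw [hσkk, hσk]
            exact hB.trans hdesc
          have hl1 : DC.len (π * s n m) + 1 = DC.len π := len_mul_s_of_descent hDπ
          have hl2 : DC.len (σ * s n m) = DC.len σ + 1 := len_mul_s_of_ascent hAσ
          have hS2 : IsSchubert (π * s n m, DC.s n i, σ * s n m) := by
            show DC.len (π * s n m) + DC.len (s n i) + DC.len (σ * s n m) = n.choose 2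
            rw [len_s hi1, hl2]; omega
          refine ⟨hS2, ?_⟩
          have hmove : DCMove (π, DC.s n i, σ) (π * s n m, DC.s n i, σ * s n m) := by
            refine ⟨π * s n m, s n i, σ, m, ?_, ascent_mul_s_of_descent hDπ,
              ascent_s hi1 hm1 (by omega), hAσ, ?_, ?_⟩
            · rw [len_s hi1]; omega
            · have he : (π, DC.s n i, σ) = ((π * s n m) * s n m, s n i, σ) := by
                rw [mul_s_mul_s]
              rw [he]
              exact Set.mem_insert _ _
            · exact Set.mem_insert_of_mem _ (Set.mem_insert_of_mem _ rfl)
          exact hf.1 _ _ hS1 hS2 (Relation.ReflTransGen.single hmove)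
        · -- compl π descends at m (values k < kk); σ descends at m
          have hAj : DC.compl π j < DC.compl π kk := by
            rcases lt_or_gt_of_ne (fun he => hkkj ((DC.compl π).injective he) :
              DC.compl π kk ≠ DC.compl π j) with h | h
            · exact absurd ⟨hA, h⟩ (hnointer kk hjltkk hkklt)
            · exact h
          have hDσ : Descent σ m := by
            refine ⟨hm1, ?_⟩
            rw [hkfin]
            show σ k < σ kk
            rw [hσkk, hσk]
            exact hAj
          have hDc : Descent (DC.compl π) m := by
            refine ⟨hm1, ?_⟩
            rw [hkfin]
            show DC.compl π k < DC.compl π kk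
            exact hA
          have hAπ : Ascent π m := descent_compl_iff.mp hDc
          have hl1 : DC.len (π * s n m) = DC.len π + 1 := len_mul_s_of_ascent hAπ
          have hl2 : DC.len (σ * s n m) + 1 = DC.len σ := len_mul_s_of_descent hDσ
          have hS2 : IsSchubert (π * s n m, DC.s n i, σ * s n m) := by
            show DC.len (π * s n m) + DC.len (s n i) + DC.len (σ * s n m) = n.choose 2
            rw [len_s hi1, hl1]; omega
          refine ⟨hS2, ?_⟩
          have hmove : DCMove (π, DC.s n i, σ) (π * s n m, DC.s n i, σ * s n m) := by
            refine ⟨π, s n i, σ * s n m, m, ?_, hAπ,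
              ascent_s hi1 hm1 (by omega), ascent_mul_s_of_descent hDσ, ?_, ?_⟩
            · rw [len_s hi1]; omega
            · have he : (π, DC.s n i, σ) = (π, s n i, (σ * s n m) * s n m) := by
                rw [mul_s_mul_s]
              rw [he]
              exact Set.mem_insert_of_mem _ (Set.mem_insert_of_mem _ rfl)
            · exact Set.mem_insert _ _
          exact hf.1 _ _ hS1 hS2 (Relation.ReflTransGen.single hmove)
      obtain ⟨hS2, hEq⟩ := hstep
      have hcompl' : DC.compl (π * s n m) = DC.compl π * s n m := by
        rw [compl_def, compl_def, mul_assoc]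
      have hsum' : DC.len (π * s n m) + DC.len (DC.compl (π * s n m)) = n.choose 2 :=
        len_add_len_compl _
      have hlen' : DC.len (σ * s n m) + 1 = DC.len (DC.compl (π * s n m)) := by
        have h1 : DC.len (π * s n m) + DC.len (s n i) + DC.len (σ * s n m) = n.choose 2 := hS2
        rw [len_s hi1] at h1
        omega
      have hdesc' : DC.compl (π * s n m) kk < DC.compl (π * s n m) j := by
        rw [hcompl']
        show DC.compl π (s n m kk) < DC.compl π (s n m j)
        rw [hskk, hsj]
        exact hdesc
      have hσ' : σ * s n m = DC.compl (π * s n m) * Equiv.swap j kk := by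
        rw [hcompl', hσ, mul_assoc, mul_assoc]
        congr 1
        rw [s_eq_swap hm1, hkfin]
        have : (⟨m, Nat.lt_of_succ_lt hm1⟩ : Fin n) = kk := rfl
        rw [this]
        exact swap_comm_right hkkj.symm hne_jk hkkk
      rw [hEq]
      exact ih ((kk : ℕ) - (j : ℕ)) (by rw [hkk]; simp; omega) (π * s n m) j kk i rfl
        hjltkk hdesc' (σ * s n m) hσ' hlen' hji (by rw [hkk]; simp; omega)

end DCAux


/-- Monk's rule, straddling case: if σ is obtained from π̄ = w₀∘π by switching the
entries in positions j < k, decreasing the length by exactly one, and j ≤ i < k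
(the swap straddles the gap between i and i+1), then f(π, s_i, σ) = 1 for any
admissible functional f. -/
theorem statement0 {n : ℕ} (hn : 2 ≤ n) (f : DC.Triple n → ℤ) (hf : DC.Admissible f)
    (π : Equiv.Perm (Fin n)) (j k : Fin n) (hjk : j < k)
    (hdesc : DC.compl π k < DC.compl π j)
    (σ : Equiv.Perm (Fin n)) (hσ : σ = DC.compl π * Equiv.swap j k)
    (hlen : DC.len σ + 1 = DC.len (DC.compl π))
    (i : ℕ) (hji : (j : ℕ) ≤ i) (hik : i < (k : ℕ)) :
    f (π, DC.s n i, σ) = 1 := by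
  exact DCAux.mainAux f hf ((k : ℕ) - (j : ℕ)) π j k i rfl hjk hdesc σ hσ hlen hji hik
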